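/- Let k ≥ 2 and let Γ = {γ_1,…,γ_k} ⊆ ℤ^k, where γ_j has j-th coordinate equal to 2 and all other coordinates equal to 1. Then Γ is an antichain for the componentwise (standard product) partial order on ℤ^k (so Γ_σ = Γ for the standard product order σ), and H(Γ) = log(k/(k−1)^{(k−1)/k}). -/

import Mathlib

open scoped BigOperators
open Classical

noncomputable section

namespace SlicePaper

/-- Shannon entropy of the `i`-th coordinate marginal of a distribution `p` on `Δ`. -/
def margEnt {ι : Type*} [Fintype ι] (Δ : Finset (ι → ℤ)) (p : (ι → ℤ) → ℝ) (i : ι) : ℝ :=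
  -∑ α ∈ Δ.image (fun γ => γ i),
      (∑ γ ∈ Δ.filter (fun γ => γ i = α), p γ) *
        Real.log (∑ γ ∈ Δ.filter (fun γ => γ i = α), p γ)

/-- The entropy `H(Δ)` of a finite set of integer tuples. -/
def HSet {ι : Type*} [Fintype ι] (Δ : Finset (ι → ℤ)) : ℝ :=
  sSup {e : ℝ | ∃ p : (ι → ℤ) → ℝ, (∀ γ, 0 ≤ p γ) ∧ (∀ γ, p γ ≠ 0 → γ ∈ Δ) ∧
    (∑ γ ∈ Δ, p γ) = 1 ∧ e = ⨅ i, margEnt Δ p i}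

/-- Maximal elements of `Δ` w.r.t. the product of the linear orders `σ i`. -/
def maxElems {ι : Type*} [Fintype ι] (σ : ι → LinearOrder ℤ) (Δ : Finset (ι → ℤ)) :
    Finset (ι → ℤ) :=
  Δ.filter (fun γ => ∀ δ ∈ Δ, (∀ i, (σ i).le (γ i) (δ i)) → γ = δ)

/-- `ξ k = log (k / (k-1)^((k-1)/k))`. -/
def xi (k : ℕ) : ℝ :=
  Real.log ((k : ℝ) / ((k : ℝ) - 1) ^ (((k : ℝ) - 1) / (k : ℝ)))

/-- Slice rank of a coefficient array `c`. -/
def sliceRank {k : ℕ} (F : Type*) [Field F] (τ : Fin k → Type*) [∀ i, Fintype (τ i)]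
    (c : (∀ i, τ i) → F) : ℕ :=
  sInf {r : ℕ | ∃ j : Fin r → Fin k, ∃ a : ∀ l : Fin r, τ (j l) → F,
    ∃ b : ∀ l : Fin r, (((i : {i : Fin k // i ≠ j l}) → τ i.1) → F),
    ∀ s : ∀ i, τ i, c s = ∑ l : Fin r, a l (s (j l)) * b l (fun i => s i.1)}

/-- `n`-th tensor power of a coefficient array. -/
def tpow {k : ℕ} {F : Type*} [Field F] {τ : Fin k → Type*} (c : (∀ i, τ i) → F) (n : ℕ) :
    (∀ i, Fin n → τ i) → F :=
  fun u => ∏ m : Fin n, c (fun i => u i m)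

/-- Support of a coefficient array, as a finite set of integer tuples. -/
def support {k : ℕ} {F : Type*} [Field F] (S : Fin k → Finset ℤ)
    (c : (∀ i, {x : ℤ // x ∈ S i}) → F) : Finset (Fin k → ℤ) :=
  (Finset.univ.filter (fun s : ∀ i, {x : ℤ // x ∈ S i} => c s ≠ 0)).image
    (fun s i => (s i : ℤ))

/-- Section `Γ_I^x`: restrictions to coordinates outside `I` of the γ ∈ Γ agreeing with x on I. -/
def sect {k : ℕ} (Γ : Finset (Fin k → ℤ)) (I : Finset (Fin k)) (x : Fin k → ℤ) :
    Finset ({i : Fin k // i ∉ I} → ℤ) :=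
  (Γ.filter (fun γ => ∀ i ∈ I, γ i = x i)).image (fun γ i => γ i.1)

/-- Section along a single coordinate. -/
def sect1 {k : ℕ} (Γ : Finset (Fin k → ℤ)) (i : Fin k) (a : ℤ) :
    Finset ({j : Fin k // j ≠ i} → ℤ) :=
  (Γ.filter (fun γ => γ i = a)).image (fun γ j => γ j.1)

/-- Trifferent set of strings. -/
def trifferent {n : ℕ} {α : Type*} (A : Finset (Fin n → α)) : Prop :=
  ∀ x ∈ A, ∀ y ∈ A, ∀ z ∈ A, x ≠ y → y ≠ z → x ≠ z →
    ∃ i, x i ≠ y i ∧ y i ≠ z i ∧ x i ≠ z i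

/-- The cube root of unity `ω = e^{2πi/3}`. -/
def w : ℂ := Complex.exp (2 * Real.pi * Complex.I / 3)

/-- The tensor `f_{x,y}(z,t)` used for the trifference problem. -/
def f {n : ℕ} (x y z t : Fin n → ℂ) : ℂ :=
  ∏ i, (x i + y i + z i) * (x i + y i + t i)

/-- Monomial functions `g_{α,β}`. -/
def g {n : ℕ} (α β : Fin n → ℕ) : (Fin n → ℂ) × (Fin n → ℂ) → ℂ :=
  fun q => ∏ i, (q.1 i + q.2 i) ^ α i * (q.1 i * q.2 i) ^ β i


/-- the set `Γ = {γ_1, …, γ_k}` with `γ_j` having `2` in coordinate `j`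
and `1` elsewhere is an antichain for the componentwise order, equals its own set of
maximal elements for the standard product order, and has entropy `ξ k`. -/
def ee (k : ℕ) : Fin k → (Fin k → ℤ) := fun j i => if i = j then 2 else 1

lemma ee_inj (k : ℕ) : Function.Injective (ee k) := by
  intro a b h
  by_contra hab
  have := congrFun h a
  simp [ee, hab] at this

lemma binEnt_formula (t : ℝ) :
    Real.binEntropy t = -(t * Real.log t + (1 - t) * Real.log (1 - t)) := by
  rw [Real.binEntropy, Real.log_inv, Real.log_inv]; ring

lemma binEnt_inv_k {k : ℕ} (hk : 2 ≤ k) : Real.binEntropy ((k:ℝ)⁻¹) = xi k := by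
  have hk0 : (0:ℝ) < (k:ℝ) := by positivity
  have hk1 : (0:ℝ) < (k:ℝ) - 1 := by
    have : (2:ℝ) ≤ (k:ℝ) := by exact_mod_cast hk
    linarith
  rw [binEnt_formula, xi, Real.log_div (by positivity) (by positivity),
    Real.log_rpow hk1, Real.log_inv]
  have h1 : 1 - (k:ℝ)⁻¹ = ((k:ℝ) - 1) / (k:ℝ) := by field_simp
  rw [h1, Real.log_div hk1.ne' hk0.ne']
  field_simp
  ring

lemma margEnt_eq {k : ℕ} (hk : 2 ≤ k) (p : (Fin k → ℤ) → ℝ)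
    (hsum : ∑ j, p (ee k j) = 1) (i : Fin k) :
    margEnt (Finset.univ.image (ee k)) p i = Real.binEntropy (p (ee k i)) := by
  set Γ := Finset.univ.image (ee k) with hΓ
  have himg : Γ.image (fun γ => γ i) = ({2, 1} : Finset ℤ) := by
    ext a
    simp only [hΓ, Finset.image_image, Finset.mem_image, Finset.mem_univ, true_and,
      Finset.mem_insert, Finset.mem_singleton]
    constructor
    · rintro ⟨j, rfl⟩
      by_cases h : i = j <;> simp [ee, h, Function.comp]
    · rintro (rfl | rfl)
      · exact ⟨i, by simp [ee, Function.comp]⟩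
      · obtain ⟨j, hj⟩ : ∃ j : Fin k, j ≠ i := by
          have : 1 < Fintype.card (Fin k) := by rw [Fintype.card_fin]; omega
          exact Fintype.exists_ne_of_one_lt_card this i
        exact ⟨j, by simp [ee, Function.comp, hj.symm]⟩
  have hf2 : Γ.filter (fun γ => γ i = 2) = {ee k i} := by
    ext γ
    simp only [hΓ, Finset.mem_filter, Finset.mem_image, Finset.mem_univ, true_and,
      Finset.mem_singleton]
    constructor
    · rintro ⟨⟨j, rfl⟩, h2⟩
      by_cases h : i = j
      · subst h; rfl
      · simp [ee, h] at h2
    · rintro rfl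
      exact ⟨⟨i, rfl⟩, by simp [ee]⟩
  have hf1 : Γ.filter (fun γ => γ i = 1) = (Finset.univ.erase i).image (ee k) := by
    ext γ
    simp only [hΓ, Finset.mem_filter, Finset.mem_image, Finset.mem_univ, true_and,
      Finset.mem_erase]
    constructor
    · rintro ⟨⟨j, rfl⟩, h1⟩
      refine ⟨j, ⟨?_, trivial⟩, rfl⟩
      intro hji; subst hji; simp [ee] at h1
    · rintro ⟨j, ⟨hji, -⟩, rfl⟩
      refine ⟨⟨j, rfl⟩, ?_⟩
      simp only [ee, if_neg (fun h : i = j => hji h.symm)]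
  have hs1 : ∑ γ ∈ Γ.filter (fun γ => γ i = 1), p γ = 1 - p (ee k i) := by
    rw [hf1, Finset.sum_image (fun a _ b _ h => ee_inj k h),
      Finset.sum_erase_eq_sub (Finset.mem_univ i), hsum]
  rw [margEnt, himg, Finset.sum_pair (by norm_num : (2:ℤ) ≠ 1)]
  rw [hf2, hs1, Finset.sum_singleton, binEnt_formula]

lemma antichain_ee (k : ℕ) :
    IsAntichain (· ≤ ·) ((Finset.univ.image (ee k) : Finset (Fin k → ℤ)) : Set (Fin k → ℤ)) := by
  intro x hx y hy hxy hle
  simp only [Finset.coe_image, Set.mem_image, Finset.coe_univ, Set.mem_univ, true_and] at hx hy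
  obtain ⟨a, rfl⟩ := hx
  obtain ⟨b, rfl⟩ := hy
  have hab : a ≠ b := fun h => hxy (by rw [h])
  have h2 := hle a
  have : (2:ℤ) ≤ 1 := by simpa [ee, hab] using h2
  omega

theorem stmt2 {k : ℕ} (hk : 2 ≤ k) (Γ : Finset (Fin k → ℤ))
    (hΓ : Γ = Finset.univ.image
      (fun j : Fin k => fun i : Fin k => if i = j then (2 : ℤ) else 1)) :
    IsAntichain (· ≤ ·) (Γ : Set (Fin k → ℤ)) ∧
    maxElems (fun _ : Fin k => (inferInstance : LinearOrder ℤ)) Γ = Γ ∧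
    HSet Γ = xi k := by
  have hΓ' : Γ = Finset.univ.image (ee k) := hΓ
  subst hΓ'
  have hNe : Nonempty (Fin k) := ⟨⟨0, by omega⟩⟩
  have hanti := antichain_ee k
  refine ⟨hanti, ?_, ?_⟩
  · rw [maxElems]
    ext γ
    simp only [Finset.mem_filter, and_iff_left_iff_imp]
    intro hγ δ hδ hle
    by_contra hne
    exact hanti (Finset.mem_coe.mpr hγ) (Finset.mem_coe.mpr hδ) hne (fun i => hle i)
  · set Γ := Finset.univ.image (ee k) with hΓdef
    have hkR : (0:ℝ) < (k:ℝ) := by positivity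
    have hcard : Γ.card = k := by
      rw [hΓdef, Finset.card_image_of_injective _ (ee_inj k), Finset.card_univ,
        Fintype.card_fin]
    have hinv2 : (k:ℝ)⁻¹ ≤ 2⁻¹ := by
      apply inv_anti₀ (by norm_num)
      exact_mod_cast hk
    -- the uniform distribution
    set p0 : (Fin k → ℤ) → ℝ := fun γ => if γ ∈ Γ then (k:ℝ)⁻¹ else 0 with hp0
    have hp0e : ∀ j, p0 (ee k j) = (k:ℝ)⁻¹ := by
      intro j
      simp only [hp0, if_pos (Finset.mem_image_of_mem _ (Finset.mem_univ j))]
      exact if_pos (Finset.mem_image_of_mem _ (Finset.mem_univ j))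
    have hp0sum : ∑ j, p0 (ee k j) = 1 := by
      simp only [hp0e, Finset.sum_const, Finset.card_univ, Fintype.card_fin, nsmul_eq_mul]
      field_simp
    have hmem : xi k ∈ {e : ℝ | ∃ p : (Fin k → ℤ) → ℝ, (∀ γ, 0 ≤ p γ) ∧
        (∀ γ, p γ ≠ 0 → γ ∈ Γ) ∧ (∑ γ ∈ Γ, p γ) = 1 ∧ e = ⨅ i, margEnt Γ p i} := by
      refine ⟨p0, ?_, ?_, ?_, ?_⟩
      · intro γ; simp only [hp0]; split
        · positivity
        · exact le_refl 0
      · intro γ h; by_contra hγ; simp [hp0, hγ] at h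
      · rw [hΓdef, Finset.sum_image (fun a _ b _ h => ee_inj k h)]
        exact hp0sum
      · have heq : ∀ i : Fin k, margEnt Γ p0 i = Real.binEntropy ((k:ℝ)⁻¹) := by
          intro i
          rw [hΓdef, margEnt_eq hk p0 hp0sum i, hp0e]
        rw [iInf_congr heq, ciInf_const, binEnt_inv_k hk]
    have hub : ∀ e ∈ {e : ℝ | ∃ p : (Fin k → ℤ) → ℝ, (∀ γ, 0 ≤ p γ) ∧
        (∀ γ, p γ ≠ 0 → γ ∈ Γ) ∧ (∑ γ ∈ Γ, p γ) = 1 ∧ e = ⨅ i, margEnt Γ p i},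
        e ≤ xi k := by
      rintro e ⟨p, hpos, hsupp, hsum, rfl⟩
      rw [hΓdef, Finset.sum_image (fun a _ b _ h => ee_inj k h)] at hsum
      obtain ⟨i0, -, hi0⟩ : ∃ i ∈ Finset.univ, p (ee k i) ≤ (k:ℝ)⁻¹ := by
        apply Finset.exists_le_of_sum_le Finset.univ_nonempty
        rw [hsum]
        simp only [Finset.sum_const, Finset.card_univ, Fintype.card_fin, nsmul_eq_mul]
        rw [mul_inv_cancel₀ hkR.ne']
      calc (⨅ i, margEnt Γ p i) ≤ margEnt Γ p i0 :=
            ciInf_le (Set.Finite.bddBelow (Set.finite_range _)) i0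
        _ = Real.binEntropy (p (ee k i0)) := by rw [hΓdef]; exact margEnt_eq hk p hsum i0
        _ ≤ Real.binEntropy ((k:ℝ)⁻¹) := by
            apply Real.binEntropy_strictMonoOn.monotoneOn
            · exact ⟨hpos _, le_trans hi0 hinv2⟩
            · exact ⟨by positivity, hinv2⟩
            · exact hi0
        _ = xi k := binEnt_inv_k hk
    exact IsGreatest.csSup_eq ⟨hmem, hub⟩

end SlicePaper
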